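/- Let V be a multi vector space over a finite-dimensional vector space X and f : X → Y a linear map. Define the multi vector spaces ker̃f on ker f with count C_V restricted to ker f, and im̃f on im f with count C_{f(V)}(y) = sup{C_V(z) : z ∈ f⁻¹(y)} for y ∈ im f. Then dim(ker̃f) + dim(im̃f) = dim(V). -/

import Mathlib

/-- The dimension of a multi vector space: the supremum of sums of counts over bases. -/
noncomputable def mdim (K : Type*) {X : Type*} [Field K] [AddCommGroup X] [Module K X]
    (C : X → ℕ) : ℕ :=
  sSup {s : ℕ | ∃ b : Module.Basis (Fin (Module.finrank K X)) K X, s = ∑ i, C (b i)}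

open Module Submodule Finset

section Aux

variable {K Z : Type*} [Field K] [AddCommGroup Z] [Module K Z]

/-- The flag submodule `{z | n ≤ D z}` (together with `0`). -/
def flagW (K : Type*) {Z : Type*} [Field K] [AddCommGroup Z] [Module K Z] (D : Z → ℕ)
    (hadd : ∀ x y : Z, min (D x) (D y) ≤ D (x + y))
    (hsmul : ∀ (a : K) (x : Z), D x ≤ D (a • x)) (n : ℕ) : Submodule K Z where
  carrier := {z | z = 0 ∨ n ≤ D z}
  zero_mem' := Or.inl rfl
  add_mem' := by
    rintro x y (rfl | hx) (rfl | hy)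
    · simp
    · simpa using (Or.inr hy : y = 0 ∨ n ≤ D y)
    · simpa using (Or.inr hx : x = 0 ∨ n ≤ D x)
    · exact Or.inr (le_trans (le_min hx hy) (hadd x y))
  smul_mem' := by
    rintro a x (rfl | hx)
    · simp
    · exact Or.inr (hx.trans (hsmul a x))

theorem mem_flagW {D : Z → ℕ} {hadd : ∀ x y : Z, min (D x) (D y) ≤ D (x + y)}
    {hsmul : ∀ (a : K) (x : Z), D x ≤ D (a • x)} {n : ℕ} {z : Z} :
    z ∈ flagW K D hadd hsmul n ↔ z = 0 ∨ n ≤ D z := Iff.rfl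

theorem finrank_comap_subtype (p q : Submodule K Z) :
    finrank K (Submodule.comap p.subtype q) = finrank K ↥(q ⊓ p) := by
  have h1 : Submodule.comap p.subtype q = Submodule.comap p.subtype (q ⊓ p) := by
    rw [Submodule.comap_inf, Submodule.comap_subtype_self, inf_top_eq]
  rw [h1]
  exact (Submodule.comapSubtypeEquivOfLe inf_le_right).finrank_eq

/-- The dimension of a multi vector space equals the sum of the dimensions of its flag. -/
theorem mdim_eq_sum_flag [FiniteDimensional K Z] (D : Z → ℕ) (ω : ℕ)
    (hb : ∀ x, D x ≤ ω)
    (hadd : ∀ x y : Z, min (D x) (D y) ≤ D (x + y))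
    (hsmul : ∀ (a : K) (x : Z), D x ≤ D (a • x)) :
    mdim K D = ∑ n ∈ Finset.Icc 1 ω, finrank K (flagW K D hadd hsmul n) := by
  classical
  set d := finrank K Z with hd
  set S : Set ℕ := {s : ℕ | ∃ b : Basis (Fin d) K Z, s = ∑ i, D (b i)} with hS
  have hmdim : mdim K D = sSup S := rfl
  have hne : S.Nonempty := ⟨_, Module.finBasis K Z, rfl⟩
  have hbdd : BddAbove S := by
    refine ⟨d * ω, ?_⟩
    rintro s ⟨c, rfl⟩
    calc ∑ i, D (c i) ≤ ∑ _i : Fin d, ω := Finset.sum_le_sum fun i _ => hb _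
      _ = d * ω := by simp [Finset.sum_const, Finset.card_univ]
  -- the swap identity
  have hswap : ∀ c : Basis (Fin d) K Z, ∑ i, D (c i)
      = ∑ n ∈ Finset.Icc 1 ω, (Finset.univ.filter fun i => n ≤ D (c i)).card := by
    intro c
    have h1 : ∀ i : Fin d, D (c i) = ∑ n ∈ Finset.Icc 1 ω, if n ≤ D (c i) then 1 else 0 := by
      intro i
      have hfil : (Finset.Icc 1 ω).filter (fun n => n ≤ D (c i)) = Finset.Icc 1 (D (c i)) := by
        ext n
        simp only [Finset.mem_filter, Finset.mem_Icc]
        exact ⟨fun ⟨⟨h1, _⟩, h3⟩ => ⟨h1, h3⟩, fun ⟨h1, h3⟩ => ⟨⟨h1, h3.trans (hb _)⟩, h3⟩⟩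
      simp only [Finset.sum_boole, Nat.cast_id, hfil, Nat.card_Icc]
      omega
    calc ∑ i, D (c i) = ∑ i : Fin d, ∑ n ∈ Finset.Icc 1 ω, if n ≤ D (c i) then 1 else 0 :=
          Finset.sum_congr rfl fun i _ => h1 i
      _ = ∑ n ∈ Finset.Icc 1 ω, ∑ i : Fin d, if n ≤ D (c i) then 1 else 0 := Finset.sum_comm
      _ = ∑ n ∈ Finset.Icc 1 ω, (Finset.univ.filter fun i => n ≤ D (c i)).card := by
          refine Finset.sum_congr rfl fun n _ => ?_
          simp [Finset.sum_boole]
  -- the count of basis vectors in a flag piece is at most its dimension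
  have hcard_le : ∀ (c : Basis (Fin d) K Z) (n : ℕ),
      (Finset.univ.filter fun i => n ≤ D (c i)).card
        ≤ finrank K (flagW K D hadd hsmul n) := by
    intro c n
    have hli : LinearIndependent K
        (fun i : {i : Fin d // n ≤ D (c i)} =>
          (⟨c i.1, Or.inr i.2⟩ : flagW K D hadd hsmul n)) := by
      apply LinearIndependent.of_comp (flagW K D hadd hsmul n).subtype
      exact c.linearIndependent.comp Subtype.val Subtype.val_injective
    have := hli.fintype_card_le_finrank
    rwa [Fintype.card_subtype] at this
  -- a maximal basis
  obtain ⟨c, hc⟩ : ∃ c : Basis (Fin d) K Z, sSup S = ∑ i, D (c i) :=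
    Nat.sSup_mem hne hbdd
  -- key claim: a maximal basis is adapted to the flag
  have hkey : ∀ n, finrank K (flagW K D hadd hsmul n)
      ≤ (Finset.univ.filter fun i => n ≤ D (c i)).card := by
    intro n
    by_contra hcon
    push_neg at hcon
    set T := Finset.univ.filter fun i => n ≤ D (c i) with hT
    set s : Finset Z := T.image c with hsdef
    have hspan : finrank K (span K (s : Set Z)) ≤ T.card :=
      (finrank_span_finset_le_card s).trans Finset.card_image_le
    have hnotle : ¬ (flagW K D hadd hsmul n ≤ span K (s : Set Z)) := by
      intro hle
      exact absurd ((Submodule.finrank_mono hle).trans hspan) (not_le.mpr hcon)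
    obtain ⟨w, hwW, hwspan⟩ := SetLike.not_le_iff_exists.mp hnotle
    have hw0 : w ≠ 0 := fun h => hwspan (h ▸ (span K (s : Set Z)).zero_mem)
    have hwD : n ≤ D w := (mem_flagW.mp hwW).resolve_left hw0
    -- find a coordinate outside T
    have hsupp : ¬ (↑(c.repr w).support ⊆ (↑T : Set (Fin d))) := by
      intro h
      apply hwspan
      have : w ∈ span K (c '' ↑T) := c.mem_span_image.mpr h
      rwa [hsdef, Finset.coe_image] at hwspan ⊢
    obtain ⟨i₀, hi₀supp, hi₀T⟩ := Set.not_subset.mp hsupp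
    have hlam : c.repr w i₀ ≠ 0 := by
      simpa using Finsupp.mem_support_iff.mp hi₀supp
    have hi₀D : D (c i₀) < n := by
      by_contra h
      exact hi₀T (by simp [hT, not_lt.mp h])
    -- exchange automorphism
    set g : Z →ₗ[K] Z := LinearMap.id + (c.coord i₀).smulRight (w - c i₀) with hg
    have hgapp : ∀ x, g x = x + (c.repr x i₀) • (w - c i₀) := fun x => rfl
    have hginj : Function.Injective g := by
      rw [← LinearMap.ker_eq_bot, Submodule.eq_bot_iff]
      intro x hx
      have hx' : x + (c.repr x i₀) • (w - c i₀) = 0 := by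
        rw [← hgapp]; exact hx
      set t := c.repr x i₀ with ht
      have hxe : x = (-t) • (w - c i₀) := by
        rw [neg_smul]
        exact eq_neg_of_add_eq_zero_left hx'
      have h0 : t * c.repr w i₀ = 0 := by
        have h1 : c.repr x i₀ = (-t) * (c.repr w i₀ - 1) := by
          conv_lhs => rw [hxe]
          rw [map_smul, map_sub, c.repr_self]
          simp only [Finsupp.smul_apply, Finsupp.sub_apply, Finsupp.single_eq_same,
            smul_eq_mul]
        rw [← ht] at h1
        linear_combination h1
      have ht0 : t = 0 := by
        rcases mul_eq_zero.mp h0 with h | h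
        · exact h
        · exact absurd h hlam
      rw [hxe, ht0]
      simp
    have hgsurj : Function.Surjective g := LinearMap.injective_iff_surjective.mp hginj
    let e : Z ≃ₗ[K] Z := LinearEquiv.ofBijective g ⟨hginj, hgsurj⟩
    let c' : Basis (Fin d) K Z := c.map e
    have hc' : ∀ i, c' i = if i = i₀ then w else c i := by
      intro i
      have : c' i = g (c i) := rfl
      rw [this, hgapp, c.repr_self]
      by_cases h : i = i₀
      · subst h; simp [Finsupp.single_apply]
      · simp [Finsupp.single_apply, h]
    have hmem' : (∑ i, D (c' i)) ∈ S := ⟨c', rfl⟩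
    have hle' : ∑ i, D (c' i) ≤ sSup S := le_csSup hbdd hmem'
    have hlt : ∑ i, D (c i) < ∑ i, D (c' i) := by
      refine Finset.sum_lt_sum (fun i _ => ?_) ⟨i₀, Finset.mem_univ _, ?_⟩
      · by_cases h : i = i₀
        · subst h; rw [hc']; simp only [if_pos rfl]
          exact le_of_lt (lt_of_lt_of_le hi₀D hwD)
        · rw [hc', if_neg h]
      · rw [hc', if_pos rfl]
        exact lt_of_lt_of_le hi₀D hwD
    omega
  -- combine
  rw [hmdim, hc, hswap c]
  refine le_antisymm (Finset.sum_le_sum fun n _ => hcard_le c n)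
    (Finset.sum_le_sum fun n _ => hkey n)

end Aux

/-- rank-nullity for multi vector spaces:
`dim(ker̃ f) + dim(im̃ f) = dim V`. -/
theorem mvs_rank_nullity
    {K X Y : Type*} [Field K] [AddCommGroup X] [Module K X] [FiniteDimensional K X]
    [AddCommGroup Y] [Module K Y]
    (C : X → ℕ) (ω : ℕ) (hb : ∀ x, C x ≤ ω)
    (hadd : ∀ x y : X, min (C x) (C y) ≤ C (x + y))
    (hsmul : ∀ (a : K) (x : X), C x ≤ C (a • x))
    (f : X →ₗ[K] Y) :
    mdim K (fun z : LinearMap.ker f => C (z : X))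
      + mdim K (fun y : LinearMap.range f => sSup {n : ℕ | ∃ z : X, f z = (y : Y) ∧ C z = n})
      = mdim K C := by
  classical
  -- kernel count
  set Ck : LinearMap.ker f → ℕ := fun z => C (z : X) with hCk
  have hbk : ∀ z, Ck z ≤ ω := fun z => hb _
  have haddk : ∀ x y : LinearMap.ker f, min (Ck x) (Ck y) ≤ Ck (x + y) := by
    intro x y; exact hadd (x : X) (y : X)
  have hsmulk : ∀ (a : K) (x : LinearMap.ker f), Ck x ≤ Ck (a • x) := by
    intro a x; exact hsmul a (x : X)
  -- image count
  set Sy : LinearMap.range f → Set ℕ :=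
    fun y => {n : ℕ | ∃ z : X, f z = (y : Y) ∧ C z = n} with hSy
  set Ci : LinearMap.range f → ℕ := fun y => sSup (Sy y) with hCi
  have hSyne : ∀ y, (Sy y).Nonempty := by
    rintro ⟨y, hy⟩
    obtain ⟨z, hz⟩ := hy
    exact ⟨C z, z, hz, rfl⟩
  have hSybdd : ∀ y, BddAbove (Sy y) := by
    intro y
    exact ⟨ω, by rintro m ⟨z, _, rfl⟩; exact hb z⟩
  have hattain : ∀ y : LinearMap.range f, ∃ z : X, f z = (y : Y) ∧ C z = Ci y := fun y =>
    Nat.sSup_mem (hSyne y) (hSybdd y)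
  have hbi : ∀ y, Ci y ≤ ω := by
    intro y
    exact csSup_le (hSyne y) (by rintro m ⟨z, _, rfl⟩; exact hb z)
  have haddi : ∀ y₁ y₂ : LinearMap.range f, min (Ci y₁) (Ci y₂) ≤ Ci (y₁ + y₂) := by
    intro y₁ y₂
    obtain ⟨z₁, hz₁, hz₁'⟩ := hattain y₁
    obtain ⟨z₂, hz₂, hz₂'⟩ := hattain y₂
    have hm : C (z₁ + z₂) ∈ Sy (y₁ + y₂) := ⟨z₁ + z₂, by simp [map_add, hz₁, hz₂], rfl⟩
    calc min (Ci y₁) (Ci y₂) = min (C z₁) (C z₂) := by rw [hz₁', hz₂']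
      _ ≤ C (z₁ + z₂) := hadd z₁ z₂
      _ ≤ Ci (y₁ + y₂) := le_csSup (hSybdd _) hm
  have hsmuli : ∀ (a : K) (y : LinearMap.range f), Ci y ≤ Ci (a • y) := by
    intro a y
    obtain ⟨z, hz, hz'⟩ := hattain y
    have hm : C (a • z) ∈ Sy (a • y) := ⟨a • z, by simp [map_smul, hz], rfl⟩
    calc Ci y = C z := hz'.symm
      _ ≤ C (a • z) := hsmul a z
      _ ≤ Ci (a • y) := le_csSup (hSybdd _) hm
  -- rewrite all three dimensions as flag sums
  rw [mdim_eq_sum_flag Ck ω hbk haddk hsmulk,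
    mdim_eq_sum_flag Ci ω hbi haddi hsmuli,
    mdim_eq_sum_flag C ω hb hadd hsmul, ← Finset.sum_add_distrib]
  refine Finset.sum_congr rfl fun n _ => ?_
  set V : Submodule K X := flagW K C hadd hsmul n with hV
  -- identify the kernel flag
  have hkerW : flagW K Ck haddk hsmulk n = Submodule.comap (LinearMap.ker f).subtype V := by
    ext z
    simp only [mem_flagW, Submodule.mem_comap, Submodule.coe_subtype, hV]
    constructor
    · rintro (rfl | h)
      · exact Or.inl rfl
      · exact Or.inr h
    · rintro (h | h)
      · exact Or.inl (Subtype.ext h)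
      · exact Or.inr h
  -- identify the image flag
  have himW : flagW K Ci haddi hsmuli n
      = Submodule.comap (LinearMap.range f).subtype (Submodule.map f V) := by
    ext y
    simp only [mem_flagW, Submodule.mem_comap, Submodule.coe_subtype, Submodule.mem_map]
    constructor
    · rintro (rfl | h)
      · exact ⟨0, Or.inl rfl, by simp⟩
      · obtain ⟨z, hz, hz'⟩ := hattain y
        exact ⟨z, Or.inr (hz' ▸ h), hz⟩
    · rintro ⟨z, hzV, hzf⟩
      rcases (mem_flagW.mp hzV) with rfl | hzD
      · left
        apply Subtype.ext
        simpa using hzf.symm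
      · right
        calc n ≤ C z := hzD
          _ ≤ Ci y := le_csSup (hSybdd y) ⟨z, hzf, rfl⟩
  rw [hkerW, himW, finrank_comap_subtype, finrank_comap_subtype]
  have hmapinf : Submodule.map f V ⊓ LinearMap.range f = Submodule.map f V :=
    inf_eq_left.mpr (LinearMap.map_le_range)
  rw [hmapinf]
  -- ordinary rank-nullity for f restricted to V
  have hrn := LinearMap.finrank_range_add_finrank_ker (f ∘ₗ V.subtype)
  have hrange : LinearMap.range (f ∘ₗ V.subtype) = Submodule.map f V := by
    rw [LinearMap.range_comp, Submodule.range_subtype]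
  have hker : LinearMap.ker (f ∘ₗ V.subtype) = Submodule.comap V.subtype (LinearMap.ker f) := by
    rw [LinearMap.ker_comp]
  rw [hrange, hker, finrank_comap_subtype] at hrn
  rw [inf_comm] at hrn
  omega
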